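/- Let P be a d-polytope in Euclidean d-space (ℝ^d with the Euclidean norm) such that the Euclidean length of each edge of P equals the Euclidean diameter of P. Then P is a d-simplex all of whose pairwise vertex distances are equal (an equilateral d-simplex); in particular P has exactly d+1 vertices. -/

import Mathlib

open Pointwise

/-- `N` is a norm on the real vector space `E`. -/
def IsNorm {E : Type*} [AddCommGroup E] [Module ℝ E] (N : E → ℝ) : Prop :=
  (∀ x, N x = 0 ↔ x = 0) ∧ (∀ (a : ℝ) (x : E), N (a • x) = |a| * N x) ∧
  (∀ x y, N (x + y) ≤ N x + N y)

/-- The segment `[x, y]` is an edge (a 1-dimensional face) of `P`. -/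
def IsEdge {E : Type*} [AddCommGroup E] [Module ℝ E] (P : Set E) (x y : E) : Prop :=
  x ≠ y ∧ IsExtreme ℝ P (segment ℝ x y)

/-- The diameter of a set `P` with respect to the norm `N`. -/
noncomputable def polyDiam {E : Type*} [AddCommGroup E] (N : E → ℝ) (P : Set E) : ℝ :=
  sSup {r | ∃ x ∈ P, ∃ y ∈ P, N (x - y) = r}

/-- The minimum pairwise distance of a finite set `V` with respect to the norm `N`. -/
noncomputable def minPairDist {E : Type*} [AddCommGroup E] (N : E → ℝ) (V : Finset E) : ℝ :=
  sInf {r | ∃ x ∈ V, ∃ y ∈ V, x ≠ y ∧ N (x - y) = r}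

/-- The functional `λ(V; N) = diam(V) / min pairwise distance`. -/
noncomputable def lamV {E : Type*} [AddCommGroup E] (N : E → ℝ) (V : Finset E) : ℝ :=
  polyDiam N (V : Set E) / minPairDist N V

/-- `P` is subequilateral with respect to `N`: every edge has length the diameter of `P`. -/
def Subequilateral {E : Type*} [AddCommGroup E] [Module ℝ E] (N : E → ℝ) (P : Set E) : Prop :=
  ∀ x y, IsEdge P x y → N (x - y) = polyDiam N P

/-- There are two parallel hyperplanes, one through `x` and one through `y`, such that `P`
lies in the closed slab bounded by them. -/
def InSlab {E : Type*} [AddCommGroup E] [Module ℝ E] (P : Set E) (x y : E) : Prop :=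
  ∃ f : E →ₗ[ℝ] ℝ, f ≠ 0 ∧ ∀ z ∈ P, min (f x) (f y) ≤ f z ∧ f z ≤ max (f x) (f y)

/-- `P` is edge-antipodal. -/
def EdgeAntipodal {E : Type*} [AddCommGroup E] [Module ℝ E] (P : Set E) : Prop :=
  ∀ x y, IsEdge P x y → InSlab P x y

/-- `P` is antipodal. -/
def Antipodal {E : Type*} [AddCommGroup E] [Module ℝ E] (P : Set E) : Prop :=
  ∀ x ∈ Set.extremePoints ℝ P, ∀ y ∈ Set.extremePoints ℝ P, x ≠ y → InSlab P x y

/-- The relative norm determined by `P`, i.e. the norm with unit ball `P - P`. -/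
noncomputable def relNorm {E : Type*} [AddCommGroup E] [Module ℝ E] (P : Set E) : E → ℝ :=
  gauge (P - P)



section Cone

variable {E : Type*} [AddCommGroup E] [Module ℝ E]

/-- The cone generated by a finite set. -/
def coneOf (X : Finset E) : Set E :=
  {x | ∃ c : E → ℝ, (∀ y ∈ X, 0 ≤ c y) ∧ x = ∑ y ∈ X, c y • y}

def rayOf (e : E) : Set E := {x | ∃ r : ℝ, 0 ≤ r ∧ x = r • e}

lemma mem_rayOf {e x : E} : x ∈ rayOf e ↔ ∃ r : ℝ, 0 ≤ r ∧ x = r • e := Iff.rfl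

lemma zero_mem_coneOf (X : Finset E) : (0 : E) ∈ coneOf X :=
  ⟨fun _ => 0, fun _ _ => le_refl _, by simp⟩

lemma smul_mem_coneOf [DecidableEq E] {X : Finset E} {e : E} (he : e ∈ X) {r : ℝ} (hr : 0 ≤ r) :
    r • e ∈ coneOf X := by
  refine ⟨fun y => if y = e then r else 0, fun y _ => by positivity, ?_⟩
  have : ∀ y ∈ X, (if y = e then r else 0) • y = if y = e then r • e else 0 := by
    intro y _; split <;> simp_all
  rw [Finset.sum_congr rfl this, Finset.sum_ite_eq' X e (fun _ => r • e), if_pos he]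

lemma mem_coneOf_self {X : Finset E} {e : E} (he : e ∈ X) : e ∈ coneOf X := by
  classical
  simpa using smul_mem_coneOf he (zero_le_one)

lemma coneOf_add {X : Finset E} {x y : E} (hx : x ∈ coneOf X) (hy : y ∈ coneOf X) :
    x + y ∈ coneOf X := by
  obtain ⟨c1, hc1, rfl⟩ := hx
  obtain ⟨c2, hc2, rfl⟩ := hy
  exact ⟨c1 + c2, fun z hz => add_nonneg (hc1 z hz) (hc2 z hz), by
    simp [add_smul, Finset.sum_add_distrib]⟩

lemma coneOf_smul {X : Finset E} {x : E} (hx : x ∈ coneOf X) {r : ℝ} (hr : 0 ≤ r) :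
    r • x ∈ coneOf X := by
  obtain ⟨c, hc, rfl⟩ := hx
  exact ⟨fun y => r * c y, fun y hy => mul_nonneg hr (hc y hy), by
    simp [Finset.smul_sum, mul_smul]⟩

lemma coneOf_mono {X Y : Finset E} (h : X ⊆ Y) : coneOf X ⊆ coneOf Y := by
  classical
  rintro x ⟨c, hc, rfl⟩
  refine ⟨fun y => if y ∈ X then c y else 0, fun y _ => ?_, ?_⟩
  · by_cases hy : y ∈ X <;> simp [hy]
    · exact hc y hy
  rw [← Finset.sum_subset h (fun y _ hy => by simp [hy])]
  exact Finset.sum_congr rfl fun y hy => by simp [hy]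

lemma sum_mem_coneOf {X : Finset E} {ι : Type*} (I : Finset ι) (t : ι → ℝ) (g : ι → E)
    (ht : ∀ i ∈ I, 0 ≤ t i) (hg : ∀ i ∈ I, g i ∈ coneOf X ∨ g i = 0) :
    ∑ i ∈ I, t i • g i ∈ coneOf X := by
  classical
  induction I using Finset.induction with
  | empty => simpa using zero_mem_coneOf X
  | @insert a s hnot ih =>
    rw [Finset.sum_insert hnot]
    refine coneOf_add ?_ (ih (fun i hi => ht i (Finset.mem_insert_of_mem hi))
      (fun i hi => hg i (Finset.mem_insert_of_mem hi)))
    rcases hg a (Finset.mem_insert_self a s) with h | h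
    · exact coneOf_smul h (ht a (Finset.mem_insert_self a s))
    · simp [h, zero_mem_coneOf]

lemma coneOf_erase_eq [DecidableEq E] {X : Finset E} {e : E} (he : e ∈ coneOf (X.erase e)) :
    coneOf X = coneOf (X.erase e) := by
  classical
  refine le_antisymm ?_ (coneOf_mono (Finset.erase_subset _ _))
  rintro x ⟨c, hc, rfl⟩
  by_cases heX : e ∈ X
  · rw [← Finset.sum_erase_add _ _ heX]
    refine coneOf_add ?_ (coneOf_smul he (hc e heX))
    exact sum_mem_coneOf _ _ _ (fun y hy => hc y (Finset.mem_of_mem_erase hy))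
      (fun y hy => Or.inl (mem_coneOf_self hy))
  · rw [Finset.erase_eq_of_notMem heX]
    exact ⟨c, hc, rfl⟩


end Cone

section LemG

variable {E : Type*} [AddCommGroup E] [Module ℝ E] [DecidableEq E]

lemma rayOf_subset_coneOf {X : Finset E} {e : E} (he : e ∈ X) :
    rayOf e ⊆ coneOf X := by
  rintro x ⟨r, hr, rfl⟩
  exact smul_mem_coneOf he hr

/-- A nonextreme generator can be dropped. -/
lemma mem_coneOf_erase_of_not_extreme {X : Finset E} {e : E}
    (h0 : (0 : E) ∉ X) (he : e ∈ X)
    (hpt : ∀ x ∈ coneOf X, -x ∈ coneOf X → x = 0)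
    (hne : ¬ IsExtreme ℝ (coneOf X) (rayOf e)) :
    e ∈ coneOf (X.erase e) := by
  have he0 : e ≠ 0 := fun h => h0 (h ▸ he)
  replace hne : ¬ (rayOf e ⊆ coneOf X ∧ ∀ ⦃x₁⦄, x₁ ∈ coneOf X → ∀ ⦃x₂⦄, x₂ ∈ coneOf X →
      ∀ ⦃x⦄, x ∈ rayOf e → x ∈ openSegment ℝ x₁ x₂ → x₁ ∈ rayOf e ∧ x₂ ∈ rayOf e) :=
    fun h => hne ⟨h.1, fun x₁ h1 x₂ h2 x hx hs => (h.2 h1 h2 hx hs).1⟩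
  push_neg at hne
  obtain ⟨a, ha, b, hb, z, hzray, hzseg, hnotray⟩ := hne (rayOf_subset_coneOf he)
  obtain ⟨p, q, hp, hq, hpq, hz⟩ := hzseg
  obtain ⟨r, hr, rfl⟩ := hzray
  rcases eq_or_lt_of_le hr with hr0 | hr0
  · -- r = 0 : both a and b must be 0, contradiction
    exfalso
    rw [← hr0, zero_smul] at hz
    have hpa : p • a ∈ coneOf X := coneOf_smul ha hp.le
    have hqb : q • b ∈ coneOf X := coneOf_smul hb hq.le
    have hpa0 : p • a = 0 := by
      refine hpt _ hpa ?_
      rw [neg_eq_of_add_eq_zero_right hz]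
      exact hqb
    have hqb0 : q • b = 0 := by rwa [hpa0, zero_add] at hz
    have ha0 : a = 0 := by
      rcases smul_eq_zero.1 hpa0 with h | h
      · exact absurd h hp.ne'
      · exact h
    have hb0 : b = 0 := by
      rcases smul_eq_zero.1 hqb0 with h | h
      · exact absurd h hq.ne'
      · exact h
    exact hnotray (mem_rayOf.2 ⟨0, le_refl _, by rw [ha0, zero_smul]⟩)
      (mem_rayOf.2 ⟨0, le_refl _, by rw [hb0, zero_smul]⟩)
  · -- r > 0
    obtain ⟨c1, hc1, ha'⟩ := ha
    obtain ⟨c2, hc2, hb'⟩ := hb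
    set α : ℝ := p / r with hα
    set β : ℝ := q / r with hβ
    have hαpos : 0 < α := div_pos hp hr0
    have hβpos : 0 < β := div_pos hq hr0
    have heab : e = α • a + β • b := by
      have : r⁻¹ • (r • e) = r⁻¹ • (p • a + q • b) := by rw [hz]
      rw [smul_smul, inv_mul_cancel₀ hr0.ne', one_smul] at this
      rw [this, smul_add, smul_smul, smul_smul, hα, hβ, div_eq_inv_mul, div_eq_inv_mul]
    set γ : ℝ := α * c1 e + β * c2 e with hγ
    set resta : E := ∑ y ∈ X.erase e, c1 y • y with hresta
    set restb : E := ∑ y ∈ X.erase e, c2 y • y with hrestb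
    have hrestaC : resta ∈ coneOf (X.erase e) :=
      sum_mem_coneOf _ _ _ (fun y hy => hc1 y (Finset.mem_of_mem_erase hy))
        (fun y hy => Or.inl (mem_coneOf_self hy))
    have hrestbC : restb ∈ coneOf (X.erase e) :=
      sum_mem_coneOf _ _ _ (fun y hy => hc2 y (Finset.mem_of_mem_erase hy))
        (fun y hy => Or.inl (mem_coneOf_self hy))
    have haeq : a = resta + c1 e • e := by
      rw [hresta, ha', ← Finset.sum_erase_add _ _ he]
    have hbeq : b = restb + c2 e • e := by
      rw [hrestb, hb', ← Finset.sum_erase_add _ _ he]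
    set stuff : E := α • resta + β • restb with hstuff
    have hstuffC : stuff ∈ coneOf (X.erase e) :=
      coneOf_add (coneOf_smul hrestaC hαpos.le) (coneOf_smul hrestbC hβpos.le)
    have hkey : e = γ • e + stuff := by
      rw [hγ, hstuff]
      calc e = α • a + β • b := heab
        _ = (α * c1 e + β * c2 e) • e + (α • resta + β • restb) := by
              rw [haeq, hbeq]; module
    rcases lt_trichotomy γ 1 with hγ1 | hγ1 | hγ1
    · -- γ < 1 : e ∈ cone of erase
      have h1 : (1 - γ) • e = stuff := by
        rw [sub_smul, one_smul]
        nth_rewrite 1 [hkey]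
        abel
      have h2 : e = (1 - γ)⁻¹ • stuff := by
        rw [← h1, smul_smul, inv_mul_cancel₀ (by linarith : (1 : ℝ) - γ ≠ 0), one_smul]
      exact Set.mem_of_eq_of_mem h2 (coneOf_smul hstuffC (inv_nonneg.2 (by linarith : (0:ℝ) ≤ 1 - γ)))
    · -- γ = 1 : a, b both on the ray, contradiction
      exfalso
      have hstuff0 : stuff = 0 := by
        have := hkey
        rw [hγ1, one_smul] at this
        have := this.symm
        rwa [add_eq_left] at this
      have hra : α • resta = 0 := by
        refine hpt _ (coneOf_mono (Finset.erase_subset _ _) (coneOf_smul hrestaC hαpos.le)) ?_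
        have hsum : α • resta + β • restb = 0 := by rw [← hstuff]; exact hstuff0
        rw [neg_eq_of_add_eq_zero_right hsum]
        exact coneOf_mono (Finset.erase_subset _ _) (coneOf_smul hrestbC hβpos.le)
      have hresta0 : resta = 0 := by
        rcases smul_eq_zero.1 hra with h | h
        · exact absurd h hαpos.ne'
        · exact h
      have hrestb0 : restb = 0 := by
        have : β • restb = 0 := by
          rw [hstuff, hresta0, smul_zero, zero_add] at hstuff0; exact hstuff0
        rcases smul_eq_zero.1 this with h | h
        · exact absurd h hβpos.ne'
        · exact h
      exact hnotray (mem_rayOf.2 ⟨c1 e, hc1 e he, by rw [haeq, hresta0, zero_add]⟩)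
        (mem_rayOf.2 ⟨c2 e, hc2 e he, by rw [hbeq, hrestb0, zero_add]⟩)
    · -- γ > 1 : contradicts pointedness
      exfalso
      have h1 : (γ - 1) • e = -stuff := by
        rw [sub_smul, one_smul]
        nth_rewrite 2 [hkey]
        abel
      have h2 : stuff = 0 := by
        refine hpt _ (coneOf_mono (Finset.erase_subset _ _) hstuffC) ?_
        rw [← h1]
        exact smul_mem_coneOf he (by linarith)
      have : (γ - 1) • e = 0 := by rw [h1, h2, neg_zero]
      rcases smul_eq_zero.1 this with h | h
      · linarith [sub_eq_zero.1 h]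
      · exact he0 h

/-- Minkowski-type theorem for finitely generated pointed cones:
the cone is generated by the generators spanning extreme rays. -/
lemma coneOf_eq_coneOf_extreme :
    ∀ (X : Finset E), (0 : E) ∉ X → (∀ x ∈ coneOf X, -x ∈ coneOf X → x = 0) →
      ∀ x ∈ coneOf X, ∃ Y ⊆ X, (∀ e ∈ Y, IsExtreme ℝ (coneOf X) (rayOf e)) ∧ x ∈ coneOf Y := by
  intro X
  induction X using Finset.strongInduction with
  | _ X ih =>
    intro h0 hpt x hx
    by_cases hall : ∀ e ∈ X, IsExtreme ℝ (coneOf X) (rayOf e)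
    · exact ⟨X, Finset.Subset.refl X, hall, hx⟩
    · push_neg at hall
      obtain ⟨e, he, hne⟩ := hall
      have hkey : e ∈ coneOf (X.erase e) := mem_coneOf_erase_of_not_extreme h0 he hpt hne
      have hEq : coneOf X = coneOf (X.erase e) := coneOf_erase_eq hkey
      obtain ⟨Y, hYsub, hYext, hxY⟩ := ih (X.erase e) (Finset.erase_ssubset he)
        (fun h => h0 (Finset.mem_of_mem_erase h)) (by rw [← hEq]; exact hpt) x (by rw [← hEq]; exact hx)
      exact ⟨Y, hYsub.trans (Finset.erase_subset _ _),
        fun f hf => by rw [hEq]; exact hYext f hf, hxY⟩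

end LemG

section FactF

variable {E : Type*} [NormedAddCommGroup E] [InnerProductSpace ℝ E]

/-- Every point of a polytope lies in the cone generated at a vertex by the directions of
edges emanating from that vertex; moreover, under `hsub`, the corresponding edge endpoints
are extreme points at distance `diam P` from the vertex. -/
lemma factF (V : Finset E) (P : Set E) (hP : P = convexHull ℝ (V : Set E))
    (hsub : ∀ x y, IsEdge P x y → dist x y = Metric.diam P)
    {u : E} (hu : u ∈ Set.extremePoints ℝ P) {w : E} (hw : w ∈ P) :
    ∃ (I : Finset E) (lam : E → ℝ) (yy : E → E),
      (∀ e ∈ I, 0 ≤ lam e ∧ yy e ∈ Set.extremePoints ℝ P ∧ dist u (yy e) = Metric.diam P) ∧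
      w - u = ∑ e ∈ I, lam e • (yy e - u) := by
  classical
  have hPc : Convex ℝ P := hP ▸ convex_convexHull ℝ _
  have hPcomp : IsCompact P := hP ▸ V.finite_toSet.isCompact_convexHull ℝ
  have huP : u ∈ P := hu.1
  set X : Finset E := (V.image (fun v => v - u)).filter (fun y => y ≠ 0) with hX
  have hXP : ∀ y ∈ X, u + y ∈ P ∧ y ≠ 0 := by
    intro y hy
    rw [hX, Finset.mem_filter, Finset.mem_image] at hy
    obtain ⟨⟨v, hv, rfl⟩, hy0⟩ := hy
    have hvP : v ∈ P := hP ▸ subset_convexHull ℝ (V : Set E) hv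
    exact ⟨by simpa using hvP, hy0⟩
  have h0X : (0 : E) ∉ X := by simp [hX]
  -- every point of P - u lies in the cone generated by X
  have hPu : ∀ p ∈ P, p - u ∈ coneOf X := by
    intro p hp
    rw [hP, Finset.convexHull_eq] at hp
    obtain ⟨cw, hcw, hsum, hcm⟩ := hp
    rw [Finset.centerMass_eq_of_sum_1 _ _ hsum] at hcm
    simp only [id] at hcm
    have hrep : p - u = ∑ v ∈ V, cw v • (v - u) := by
      have h1 : ∑ v ∈ V, cw v • (v - u) = (∑ v ∈ V, cw v • v) - (∑ v ∈ V, cw v) • u := by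
        rw [Finset.sum_smul, ← Finset.sum_sub_distrib]
        exact Finset.sum_congr rfl fun v _ => smul_sub _ _ _
      rw [h1, hcm, hsum, one_smul]
    rw [hrep]
    refine sum_mem_coneOf _ _ _ (fun v hv => hcw v hv) (fun v hv => ?_)
    by_cases hvu : v - u = 0
    · exact Or.inr hvu
    · refine Or.inl (mem_coneOf_self ?_)
      rw [hX, Finset.mem_filter, Finset.mem_image]
      exact ⟨⟨v, hv, rfl⟩, hvu⟩
  -- points of the cone can be pushed slightly into P
  have hsmall : ∀ x ∈ coneOf X, ∃ δ : ℝ, 0 < δ ∧ u + δ • x ∈ P := by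
    rintro x ⟨c, hc, rfl⟩
    set T := ∑ y ∈ X, c y with hT
    have hT0 : 0 ≤ T := Finset.sum_nonneg hc
    rcases eq_or_lt_of_le hT0 with hT0' | hT0'
    · have hall : ∀ y ∈ X, c y = 0 :=
        (Finset.sum_eq_zero_iff_of_nonneg hc).1 hT0'.symm
      have : ∑ y ∈ X, c y • y = 0 := Finset.sum_eq_zero fun y hy => by rw [hall y hy, zero_smul]
      exact ⟨1, one_pos, by rw [this, smul_zero, add_zero]; exact huP⟩
    · refine ⟨T⁻¹, inv_pos.2 hT0', ?_⟩
      have hkey : u + T⁻¹ • ∑ y ∈ X, c y • y = ∑ y ∈ X, (c y / T) • (u + y) := by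
        have h1 : ∀ y ∈ X, (c y / T) • (u + y) = (c y / T) • u + T⁻¹ • (c y • y) := by
          intro y _
          module
        rw [Finset.sum_congr rfl h1, Finset.sum_add_distrib, ← Finset.sum_smul,
          ← Finset.sum_div, ← hT, div_self hT0'.ne', one_smul, ← Finset.smul_sum]
      rw [hkey]
      refine hPc.sum_mem (fun y _ => div_nonneg (hc y ‹_›) hT0) ?_
        (fun y hy => (hXP y hy).1)
      rw [← Finset.sum_div, ← hT, div_self hT0'.ne']
  -- the cone is pointed since u is an extreme point
  have hpt : ∀ x ∈ coneOf X, -x ∈ coneOf X → x = 0 := by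
    intro x hx hnx
    obtain ⟨δ₁, hδ₁, h1⟩ := hsmall x hx
    obtain ⟨δ₂, hδ₂, h2⟩ := hsmall (-x) hnx
    set p : ℝ := δ₂ / (δ₁ + δ₂) with hp
    set q : ℝ := δ₁ / (δ₁ + δ₂) with hq
    have hδ12 : 0 < δ₁ + δ₂ := by linarith
    have hppos : 0 < p := div_pos hδ₂ hδ12
    have hqpos : 0 < q := div_pos hδ₁ hδ12
    have hpq : p + q = 1 := by rw [hp, hq, ← add_div, add_comm δ₂ δ₁, div_self hδ12.ne']
    have hcoef : p * δ₁ - q * δ₂ = 0 := by rw [hp, hq]; field_simp; ring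
    have hopen : u ∈ openSegment ℝ (u + δ₁ • x) (u + δ₂ • (-x)) := by
      refine ⟨p, q, hppos, hqpos, hpq, ?_⟩
      have : p • (u + δ₁ • x) + q • (u + δ₂ • (-x)) = (p + q) • u + (p * δ₁ - q * δ₂) • x := by
        module
      rw [this, hpq, hcoef, one_smul, zero_smul, add_zero]
    obtain heq := hu.2 h1 h2 hopen
    have : δ₁ • x = 0 := by
      have := heq
      rwa [add_eq_left] at this
    rcases smul_eq_zero.1 this with h | h
    · exact absurd h hδ₁.ne'
    · exact h
  obtain ⟨Y, hYX, hYext, hwY⟩ := coneOf_eq_coneOf_extreme X h0X hpt (w - u) (hPu w hw)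
  -- for each extreme direction, construct the corresponding edge
  have hedge : ∀ e ∈ Y, ∃ (ye : E) (re : ℝ), 0 < re ∧ ye ∈ Set.extremePoints ℝ P ∧
      dist u ye = Metric.diam P ∧ ye - u = re • e := by
    intro e he
    have heX : e ∈ X := hYX he
    have he0 : e ≠ 0 := (hXP e heX).2
    have hene : (0:ℝ) < ‖e‖ := norm_pos_iff.2 he0
    set A : Set ℝ := {r : ℝ | 0 ≤ r ∧ u + r • e ∈ P} with hA
    have hA0 : (0:ℝ) ∈ A := ⟨le_refl _, by simpa using huP⟩
    set M : ℝ := Metric.diam P / ‖e‖ with hM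
    have hMub : ∀ r ∈ A, r ≤ M := by
      intro r hr
      obtain ⟨hr0, hrP⟩ := hr
      have hd : dist u (u + r • e) ≤ Metric.diam P :=
        Metric.dist_le_diam_of_mem hPcomp.isBounded huP hrP
      rw [dist_self_add_right, norm_smul, Real.norm_eq_abs, abs_of_nonneg hr0] at hd
      rw [hM, le_div_iff₀ hene]
      exact hd
    have hAbdd : BddAbove A := ⟨M, hMub⟩
    have hAclosed : IsClosed A := by
      have : A = Set.Ici (0:ℝ) ∩ ((fun r : ℝ => u + r • e) ⁻¹' P) := by
        ext r; simp [hA, Set.mem_Ici, and_comm]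
      rw [this]
      have hcont : Continuous (fun r : ℝ => u + r • e) :=
        continuous_const.add (continuous_id.smul continuous_const)
      exact isClosed_Ici.inter (hPcomp.isClosed.preimage hcont)
    have hAcomp : IsCompact A := by
      refine (isCompact_Icc (a := (0:ℝ)) (b := M)).of_isClosed_subset hAclosed (fun r hr => ?_)
      exact Set.mem_Icc.2 ⟨hr.1, hMub r hr⟩
    obtain ⟨δ, hδpos, hδP⟩ := hsmall e (coneOf_mono hYX (mem_coneOf_self he))
    have hδA : δ ∈ A := ⟨hδpos.le, hδP⟩
    set rs : ℝ := sSup A with hrs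
    have hrsA : rs ∈ A := hAcomp.sSup_mem ⟨0, hA0⟩
    have hrspos : 0 < rs := lt_of_lt_of_le hδpos (le_csSup hAbdd hδA)
    set y : E := u + rs • e with hy
    have hyP : y ∈ P := hrsA.2
    have hyu : y - u = rs • e := by rw [hy]; abel
    -- the segment [u, y] is exactly the part of P on the ray from u through e
    have hseg_sub : ∀ θ : ℝ, 0 ≤ θ → θ ≤ 1 → u + (θ * rs) • e ∈ P := by
      intro θ h0 h1
      have : u + (θ * rs) • e = (1 - θ) • u + θ • y := by rw [hy]; module
      rw [this]
      exact hPc huP hyP (by linarith) h0 (by ring)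
    have hseg_eq : segment ℝ u y = {p : E | ∃ r : ℝ, 0 ≤ r ∧ p = u + r • e} ∩ P := by
      apply Set.Subset.antisymm
      · intro p hp
        rw [segment_eq_image'] at hp
        obtain ⟨θ, ⟨h0, h1⟩, hpe⟩ := hp
        have hpe' : p = u + (θ * rs) • e := by
          rw [← hpe]; simp [hyu, smul_smul]
        exact ⟨⟨θ * rs, mul_nonneg h0 hrspos.le, hpe'⟩, hpe' ▸ hseg_sub θ h0 h1⟩
      · rintro p ⟨⟨r, hr0, rfl⟩, hpP⟩
        have hrA : r ∈ A := ⟨hr0, hpP⟩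
        have hrle : r ≤ rs := le_csSup hAbdd hrA
        rw [segment_eq_image']
        refine ⟨r / rs, ⟨div_nonneg hr0 hrspos.le, (div_le_one hrspos).2 hrle⟩, ?_⟩
        simp only [hyu, smul_smul]
        rw [div_mul_cancel₀ _ hrspos.ne']
    have hext := hYext e he
    -- [u,y] is an extreme subset of P
    have hedge_ext : IsExtreme ℝ P (segment ℝ u y) := by
      constructor
      · rw [hseg_eq]; exact Set.inter_subset_right
      · intro x₁ hx₁ x₂ hx₂ z hzseg hzopen
        have hz1 : z - u ∈ rayOf e := by
          rw [hseg_eq] at hzseg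
          obtain ⟨⟨r, hr, hzz⟩, -⟩ := hzseg
          exact ⟨r, hr, by rw [hzz]; abel⟩
        have hx1c : x₁ - u ∈ coneOf X := hPu x₁ hx₁
        have hx2c : x₂ - u ∈ coneOf X := hPu x₂ hx₂
        have hzopen' : z - u ∈ openSegment ℝ (x₁ - u) (x₂ - u) := by
          obtain ⟨p, q, hp, hq, hpq, hpqz⟩ := hzopen
          refine ⟨p, q, hp, hq, hpq, ?_⟩
          have : p • (x₁ - u) + q • (x₂ - u) = p • x₁ + q • x₂ - (p + q) • u := by module
          rw [this, hpqz, hpq, one_smul]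
        obtain ⟨h1, h2⟩ := (⟨hext.2 hx1c hx2c hz1 hzopen',
            hext.right_mem_of_mem_openSegment hx1c hx2c hz1 hzopen'⟩ : _ ∧ _)
        refine (⟨?_, ?_⟩ : x₁ ∈ segment ℝ u y ∧ x₂ ∈ segment ℝ u y).1
        · obtain ⟨r1, hr1, hx1e⟩ := h1
          rw [hseg_eq]
          exact ⟨⟨r1, hr1, by rw [← hx1e]; abel⟩, hx₁⟩
        · obtain ⟨r2, hr2, hx2e⟩ := h2
          rw [hseg_eq]
          exact ⟨⟨r2, hr2, by rw [← hx2e]; abel⟩, hx₂⟩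
    have huy : u ≠ y := by
      intro h
      have : rs • e = 0 := by
        have := h.symm
        rw [hy, add_eq_left] at this
        exact this
      rcases smul_eq_zero.1 this with h' | h'
      · exact hrspos.ne' h'
      · exact he0 h'
    have hdist : dist u y = Metric.diam P := hsub u y ⟨huy, hedge_ext⟩
    -- y is an extreme point of P
    have hyext : y ∈ Set.extremePoints ℝ P := by
      refine mem_extremePoints.2 ⟨hyP, fun x₁ hx₁ x₂ hx₂ hyopen => ?_⟩
      obtain ⟨hs1, hs2⟩ := (⟨hedge_ext.2 hx₁ hx₂ (right_mem_segment ℝ u y) hyopen,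
          hedge_ext.right_mem_of_mem_openSegment hx₁ hx₂ (right_mem_segment ℝ u y) hyopen⟩ : _ ∧ _)
      rw [segment_eq_image'] at hs1 hs2
      obtain ⟨θ₁, ⟨hθ₁0, hθ₁1⟩, hx1e⟩ := hs1
      obtain ⟨θ₂, ⟨hθ₂0, hθ₂1⟩, hx2e⟩ := hs2
      obtain ⟨p, q, hp, hq, hpq, hpqy⟩ := hyopen
      have hvec : ((p * θ₁ + q * θ₂ - 1) * rs) • e = 0 := by
        have hy2 : p • x₁ + q • x₂ = u + rs • e := by rw [hpqy, hy]
        rw [← hx1e, ← hx2e] at hy2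
        simp only [hyu] at hy2
        have heq2 : p • (u + θ₁ • (rs • e)) + q • (u + θ₂ • (rs • e)) =
            (p + q) • u + ((p * θ₁ + q * θ₂) * rs) • e := by module
        rw [heq2, hpq, one_smul] at hy2
        have h3 : ((p * θ₁ + q * θ₂) * rs) • e = rs • e := add_left_cancel hy2
        calc ((p * θ₁ + q * θ₂ - 1) * rs) • e
            = ((p * θ₁ + q * θ₂) * rs) • e - rs • e := by
              rw [show (p * θ₁ + q * θ₂ - 1) * rs = (p * θ₁ + q * θ₂) * rs - rs by ring,
                sub_smul]
          _ = 0 := by rw [h3, sub_self]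
      have hcoef : p * θ₁ + q * θ₂ = 1 := by
        rcases smul_eq_zero.1 hvec with h' | h'
        · rcases mul_eq_zero.1 h' with h'' | h''
          · linarith
          · exact absurd h'' hrspos.ne'
        · exact absurd h' he0
      have hθ₁ : θ₁ = 1 := by nlinarith
      have hθ₂ : θ₂ = 1 := by nlinarith
      constructor
      · rw [← hx1e, hθ₁]; simp
      · rw [← hx2e, hθ₂]; simp
    exact ⟨y, rs, hrspos, hyext, hdist, hyu⟩
  -- assemble the conic representation
  obtain ⟨c, hc, hrep⟩ := hwY
  have H : ∀ e : E, ∃ (ye : E) (re : ℝ), e ∈ Y →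
      0 < re ∧ ye ∈ Set.extremePoints ℝ P ∧ dist u ye = Metric.diam P ∧ ye - u = re • e := by
    intro e
    by_cases he : e ∈ Y
    · obtain ⟨ye, re, h⟩ := hedge e he
      exact ⟨ye, re, fun _ => h⟩
    · exact ⟨0, 0, fun h => absurd h he⟩
  choose ye re hyere using H
  refine ⟨Y, fun e => c e / re e, ye, fun e he => ?_, ?_⟩
  · obtain ⟨hre, hyeext, hyedist, -⟩ := hyere e he
    exact ⟨div_nonneg (hc e he) hre.le, hyeext, hyedist⟩
  · rw [hrep]
    refine Finset.sum_congr rfl fun e he => ?_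
    obtain ⟨hre, -, -, hyee⟩ := hyere e he
    rw [hyee, smul_smul, div_mul_cancel₀ _ hre.ne']

end FactF

section MainLemma

open RealInnerProductSpace

variable {E : Type*} [NormedAddCommGroup E] [InnerProductSpace ℝ E]

lemma inner_formula (a b : E) : ⟪a, b⟫ = (‖a‖^2 + ‖b‖^2 - ‖a - b‖^2)/2 := by
  have := norm_sub_sq_real a b; linarith

lemma inner_four (x y z w : E) :
    ⟪x - y, z - w⟫ = (‖x - w‖^2 + ‖y - z‖^2 - ‖x - z‖^2 - ‖y - w‖^2)/2 := by
  rw [inner_sub_left, inner_sub_right, inner_sub_right,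
    inner_formula x z, inner_formula x w, inner_formula y z, inner_formula y w]
  ring

set_option maxHeartbeats 1000000 in
lemma min_pair_contradiction (V : Finset E) (P : Set E)
    (hP : P = convexHull ℝ (V : Set E))
    (hsub : ∀ x y, IsEdge P x y → dist x y = Metric.diam P)
    {u0 w0 : E} (hu0 : u0 ∈ Set.extremePoints ℝ P) (hw0 : w0 ∈ Set.extremePoints ℝ P)
    (hne : u0 ≠ w0)
    (hmin : ∀ p ∈ Set.extremePoints ℝ P, ∀ q ∈ Set.extremePoints ℝ P, p ≠ q →
      dist u0 w0 ≤ dist p q)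
    (hlt : dist u0 w0 < Metric.diam P) : False := by
  classical
  set D : ℝ := Metric.diam P with hD
  set t : ℝ := dist u0 w0 with ht
  have hPcomp : IsCompact P := hP ▸ V.finite_toSet.isCompact_convexHull ℝ
  have ht0 : 0 < t := dist_pos.2 hne
  have hD0 : 0 < D := lt_trans ht0 hlt
  have hbd : ∀ p ∈ P, ∀ q ∈ P, ‖p - q‖ ≤ D := fun p hp q hq => by
    rw [← dist_eq_norm]; exact Metric.dist_le_diam_of_mem hPcomp.isBounded hp hq
  have hu0P : u0 ∈ P := hu0.1
  have hw0P : w0 ∈ P := hw0.1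
  obtain ⟨I, lam, yy, hI, hrepI⟩ := factF V P hP hsub hu0 hw0P
  obtain ⟨J, mu, zz, hJ, hrepJ⟩ := factF V P hP hsub hw0 hu0P
  -- basic distance facts
  have htn : ‖w0 - u0‖ = t := by rw [← dist_eq_norm, dist_comm]
  have htn' : ‖u0 - w0‖ = t := by rw [← dist_eq_norm]
  have hEn : ∀ e ∈ I, ‖yy e - u0‖ = D := fun e he => by
    rw [← dist_eq_norm, dist_comm]; exact (hI e he).2.2
  have hFn : ∀ f ∈ J, ‖zz f - w0‖ = D := fun f hf => by
    rw [← dist_eq_norm, dist_comm]; exact (hJ f hf).2.2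
  have hyyP : ∀ e ∈ I, yy e ∈ P := fun e he => (hI e he).2.1.1
  have hzzP : ∀ f ∈ J, zz f ∈ P := fun f hf => (hJ f hf).2.1.1
  have hyy_ne_w0 : ∀ e ∈ I, yy e ≠ w0 := by
    intro e he h
    have h2 := (hI e he).2.2
    rw [h] at h2
    exact hlt.ne h2
  have hzz_ne_u0 : ∀ f ∈ J, zz f ≠ u0 := by
    intro f hf h
    have h2 := (hJ f hf).2.2
    rw [h, dist_comm] at h2
    exact hlt.ne h2
  -- min distance bounds
  have hmin_w0yy : ∀ e ∈ I, t ≤ ‖w0 - yy e‖ := by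
    intro e he
    rw [← dist_eq_norm]
    exact hmin w0 hw0 (yy e) (hI e he).2.1 (fun h => hyy_ne_w0 e he h.symm)
  have hmin_u0zz : ∀ f ∈ J, t ≤ ‖u0 - zz f‖ := by
    intro f hf
    rw [← dist_eq_norm]
    exact hmin u0 hu0 (zz f) (hJ f hf).2.1 (fun h => hzz_ne_u0 f hf h.symm)
  -- the A and B quantities
  set A : E → ℝ := fun e => ⟪w0 - u0, yy e - u0⟫ with hA
  set B : E → ℝ := fun f => ⟪u0 - w0, zz f - w0⟫ with hB
  set s : ℝ := ∑ e ∈ I, lam e with hs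
  set σ : ℝ := ∑ f ∈ J, mu f with hσ
  -- formula for A e and upper bound
  have hA_formula : ∀ e ∈ I, A e = (t^2 + D^2 - ‖w0 - yy e‖^2)/2 := by
    intro e he
    simp only [hA]
    rw [inner_four w0 u0 (yy e) u0, htn, norm_sub_rev u0 (yy e), hEn e he, sub_self, norm_zero]
    ring
  have hB_formula : ∀ f ∈ J, B f = (t^2 + D^2 - ‖u0 - zz f‖^2)/2 := by
    intro f hf
    simp only [hB]
    rw [inner_four u0 w0 (zz f) w0, htn', norm_sub_rev w0 (zz f), hFn f hf, sub_self, norm_zero]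
    ring
  have hA_ub : ∀ e ∈ I, A e ≤ D^2/2 := by
    intro e he
    rw [hA_formula e he]
    have h1 := hmin_w0yy e he
    have h2 : t^2 ≤ ‖w0 - yy e‖^2 := pow_le_pow_left₀ ht0.le h1 2
    linarith
  have hB_ub : ∀ f ∈ J, B f ≤ D^2/2 := by
    intro f hf
    rw [hB_formula f hf]
    have h1 := hmin_u0zz f hf
    have h2 : t^2 ≤ ‖u0 - zz f‖^2 := pow_le_pow_left₀ ht0.le h1 2
    linarith
  have hEE : ∀ e ∈ I, ∀ e' ∈ I, D^2/2 ≤ ⟪yy e - u0, yy e' - u0⟫ := by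
    intro e he e' he'
    rw [inner_four (yy e) u0 (yy e') u0, norm_sub_rev u0 (yy e'), hEn e he, hEn e' he',
      sub_self, norm_zero]
    have h1 : ‖yy e - yy e'‖ ≤ D := hbd _ (hyyP e he) _ (hyyP e' he')
    have h2 : (0:ℝ) ≤ ‖yy e - yy e'‖ := norm_nonneg _
    have h3 : ‖yy e - yy e'‖^2 ≤ D^2 := pow_le_pow_left₀ h2 h1 2
    linarith
  have hA_lb : ∀ e ∈ I, D^2/2 * (s + lam e) ≤ A e := by
    intro e he
    have hexp : A e = ∑ e' ∈ I, lam e' * ⟪yy e' - u0, yy e - u0⟫ := by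
      simp only [hA]
      rw [hrepI, sum_inner]
      exact Finset.sum_congr rfl fun e' _ => real_inner_smul_left _ _ _
    rw [hexp, ← Finset.sum_erase_add _ _ he]
    have h1 : ∑ e' ∈ I.erase e, lam e' * (D^2/2) ≤
        ∑ e' ∈ I.erase e, lam e' * ⟪yy e' - u0, yy e - u0⟫ :=
      Finset.sum_le_sum fun e' he' =>
        mul_le_mul_of_nonneg_left (hEE e' (Finset.mem_of_mem_erase he') e he)
          (hI e' (Finset.mem_of_mem_erase he')).1
    have h2 : ∑ e' ∈ I.erase e, lam e' * (D^2/2) = (s - lam e) * (D^2/2) := by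
      rw [← Finset.sum_mul]
      congr 1
      rw [hs, ← Finset.sum_erase_add _ _ he]
      ring
    have h4 : ⟪yy e - u0, yy e - u0⟫ = D^2 := by
      rw [real_inner_self_eq_norm_sq, hEn e he]
    rw [h4]
    have h5 : (s - lam e) * (D^2/2) + lam e * D^2 = D^2/2 * (s + lam e) := by ring
    linarith
  have hs_nonneg : 0 ≤ s := Finset.sum_nonneg fun e he => (hI e he).1
  have hσ_nonneg : 0 ≤ σ := Finset.sum_nonneg fun f hf => (hJ f hf).1
  have hs_pos : 0 < s := by
    rcases eq_or_lt_of_le hs_nonneg with h0 | h0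
    · exfalso
      have hall : ∀ e ∈ I, lam e = 0 :=
        (Finset.sum_eq_zero_iff_of_nonneg fun e he => (hI e he).1).1 h0.symm
      have : w0 - u0 = 0 := by
        rw [hrepI]
        exact Finset.sum_eq_zero fun e he => by rw [hall e he, zero_smul]
      exact hne (sub_eq_zero.1 this).symm
    · exact h0
  have hσ_pos : 0 < σ := by
    rcases eq_or_lt_of_le hσ_nonneg with h0 | h0
    · exfalso
      have hall : ∀ f ∈ J, mu f = 0 :=
        (Finset.sum_eq_zero_iff_of_nonneg fun f hf => (hJ f hf).1).1 h0.symm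
      have : u0 - w0 = 0 := by
        rw [hrepJ]
        exact Finset.sum_eq_zero fun f hf => by rw [hall f hf, zero_smul]
      exact hne (sub_eq_zero.1 this)
    · exact h0
  have ht2I : t^2 = ∑ e ∈ I, lam e * A e := by
    have h1 : ⟪w0 - u0, w0 - u0⟫ = t^2 := by rw [real_inner_self_eq_norm_sq, htn]
    rw [← h1]
    nth_rewrite 2 [hrepI]
    rw [inner_sum]
    exact Finset.sum_congr rfl fun e _ => by rw [real_inner_smul_right]
  have ht2J : t^2 = ∑ f ∈ J, mu f * B f := by
    have h1 : ⟪u0 - w0, u0 - w0⟫ = t^2 := by rw [real_inner_self_eq_norm_sq, htn']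
    rw [← h1]
    nth_rewrite 2 [hrepJ]
    rw [inner_sum]
    exact Finset.sum_congr rfl fun f _ => by rw [real_inner_smul_right]
  have hD2pos : 0 < D^2/2 := by positivity
  have hs_le1 : s ≤ 1 := by
    obtain ⟨e, he, hle⟩ := Finset.exists_lt_of_sum_lt
      (show ∑ _e ∈ I, (0:ℝ) < ∑ e ∈ I, lam e by simpa using hs_pos)
    have h1 := hA_lb e he
    have h2 := hA_ub e he
    nlinarith
  have hσ_le1 : σ ≤ 1 := by
    obtain ⟨f, hf, hle⟩ := Finset.exists_lt_of_sum_lt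
      (show ∑ _f ∈ J, (0:ℝ) < ∑ f ∈ J, mu f by simpa using hσ_pos)
    have hB_lb : D^2/2 * (σ + mu f) ≤ B f := by
      have hexp : B f = ∑ f' ∈ J, mu f' * ⟪zz f' - w0, zz f - w0⟫ := by
        simp only [hB]
        rw [hrepJ, sum_inner]
        exact Finset.sum_congr rfl fun f' _ => real_inner_smul_left _ _ _
      have hFF : ∀ f' ∈ J, D^2/2 ≤ ⟪zz f' - w0, zz f - w0⟫ := by
        intro f' hf'
        rw [inner_four (zz f') w0 (zz f) w0, norm_sub_rev w0 (zz f), hFn f hf, hFn f' hf',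
          sub_self, norm_zero]
        have h1 : ‖zz f' - zz f‖ ≤ D := hbd _ (hzzP f' hf') _ (hzzP f hf)
        have h2 : (0:ℝ) ≤ ‖zz f' - zz f‖ := norm_nonneg _
        have h3 : ‖zz f' - zz f‖^2 ≤ D^2 := pow_le_pow_left₀ h2 h1 2
        linarith
      rw [hexp, ← Finset.sum_erase_add _ _ hf]
      have h1 : ∑ f' ∈ J.erase f, mu f' * (D^2/2) ≤
          ∑ f' ∈ J.erase f, mu f' * ⟪zz f' - w0, zz f - w0⟫ :=
        Finset.sum_le_sum fun f' hf' =>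
          mul_le_mul_of_nonneg_left (hFF f' (Finset.mem_of_mem_erase hf'))
            (hJ f' (Finset.mem_of_mem_erase hf')).1
      have h2 : ∑ f' ∈ J.erase f, mu f' * (D^2/2) = (σ - mu f) * (D^2/2) := by
        rw [← Finset.sum_mul]
        congr 1
        rw [hσ, ← Finset.sum_erase_add _ _ hf]
        ring
      have h4 : ⟪zz f - w0, zz f - w0⟫ = D^2 := by
        rw [real_inner_self_eq_norm_sq, hFn f hf]
      rw [h4]
      have h5 : (σ - mu f) * (D^2/2) + mu f * D^2 = D^2/2 * (σ + mu f) := by ring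
      linarith
    have h2 := hB_ub f hf
    nlinarith
  -- the cross bound
  have hC : ∀ e ∈ I, ∀ f ∈ J, (D^2 + t^2)/2 - A e - B f ≤ ⟪yy e - u0, zz f - w0⟫ := by
    intro e he f hf
    rw [inner_four (yy e) u0 (zz f) w0]
    have h1 : ‖yy e - w0‖ = ‖w0 - yy e‖ := norm_sub_rev _ _
    have h2 : ‖w0 - yy e‖^2 = t^2 + D^2 - 2 * A e := by have := hA_formula e he; linarith
    have h3 : ‖u0 - zz f‖^2 = t^2 + D^2 - 2 * B f := by have := hB_formula f hf; linarith
    have h4 : ‖yy e - zz f‖ ≤ D := hbd _ (hyyP e he) _ (hzzP f hf)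
    have h5 : (0:ℝ) ≤ ‖yy e - zz f‖ := norm_nonneg _
    have h6 : ‖yy e - zz f‖^2 ≤ D^2 := pow_le_pow_left₀ h5 h4 2
    rw [h1, h2, h3, htn']
    linarith
  -- the double sum identity and bound
  have hdouble : -(t^2) = ∑ e ∈ I, lam e * ∑ f ∈ J, mu f * ⟪yy e - u0, zz f - w0⟫ := by
    have h1 : ⟪w0 - u0, u0 - w0⟫ = -(t^2) := by
      rw [show u0 - w0 = -(w0 - u0) by abel, inner_neg_right, real_inner_self_eq_norm_sq, htn]
    rw [← h1, hrepI, hrepJ, sum_inner]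
    refine Finset.sum_congr rfl fun e _ => ?_
    rw [real_inner_smul_left, inner_sum, Finset.mul_sum, Finset.mul_sum]
    exact Finset.sum_congr rfl fun f _ => by rw [real_inner_smul_right]
  have hinner_bound : ∀ e ∈ I, σ * ((D^2 + t^2)/2 - A e) - t^2 ≤
      ∑ f ∈ J, mu f * ⟪yy e - u0, zz f - w0⟫ := by
    intro e he
    have h1 : ∑ f ∈ J, mu f * ((D^2 + t^2)/2 - A e - B f) ≤
        ∑ f ∈ J, mu f * ⟪yy e - u0, zz f - w0⟫ :=
      Finset.sum_le_sum fun f hf => mul_le_mul_of_nonneg_left (hC e he f hf) (hJ f hf).1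
    have h2 : ∑ f ∈ J, mu f * ((D^2 + t^2)/2 - A e - B f) =
        σ * ((D^2 + t^2)/2 - A e) - t^2 := by
      have h3 : ∀ f ∈ J, mu f * ((D^2 + t^2)/2 - A e - B f) =
          mu f * ((D^2 + t^2)/2 - A e) - mu f * B f := fun f _ => by ring
      rw [Finset.sum_congr rfl h3, Finset.sum_sub_distrib, ← Finset.sum_mul, ← hσ, ← ht2J]
    linarith
  have houter : ∑ e ∈ I, lam e * (σ * ((D^2 + t^2)/2 - A e) - t^2) ≤ -(t^2) := by
    rw [hdouble]
    exact Finset.sum_le_sum fun e he =>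
      mul_le_mul_of_nonneg_left (hinner_bound e he) (hI e he).1
  have hlhs : ∑ e ∈ I, lam e * (σ * ((D^2 + t^2)/2 - A e) - t^2) =
      s * (σ * ((D^2 + t^2)/2)) - σ * t^2 - s * t^2 := by
    have h3 : ∀ e ∈ I, lam e * (σ * ((D^2 + t^2)/2 - A e) - t^2) =
        lam e * (σ * ((D^2 + t^2)/2)) - σ * (lam e * A e) - lam e * t^2 := fun e _ => by ring
    rw [Finset.sum_congr rfl h3, Finset.sum_sub_distrib, Finset.sum_sub_distrib,
      ← Finset.sum_mul, ← Finset.mul_sum, ← hs, ← ht2I, ← Finset.sum_mul, ← hs]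
  have hfinal : s * (σ * ((D^2 + t^2)/2)) - σ * t^2 - s * t^2 ≤ -(t^2) := by
    rw [← hlhs]; exact houter
  -- derive the contradiction
  have hh1 : s + σ - 1 ≤ s * σ := by nlinarith
  have hh2 : (s + σ - 1) * t^2 ≤ s * σ * t^2 :=
    mul_le_mul_of_nonneg_right hh1 (sq_nonneg t)
  have hh3 : s * σ * ((D^2 + t^2)/2) ≤ (s + σ - 1) * t^2 := by nlinarith
  have hh4 : 0 < s * σ := mul_pos hs_pos hσ_pos
  have hh5 : D^2 + t^2 ≤ 2 * t^2 := by nlinarith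
  nlinarith [mul_pos (sub_pos.2 hlt) (show (0:ℝ) < D + t by linarith)]

end MainLemma

section Assembly

open RealInnerProductSpace

variable {E : Type*} [NormedAddCommGroup E] [InnerProductSpace ℝ E]

lemma extreme_dists_eq (V : Finset E) (P : Set E)
    (hP : P = convexHull ℝ (V : Set E))
    (hsub : ∀ x y, IsEdge P x y → dist x y = Metric.diam P) :
    ∀ u ∈ Set.extremePoints ℝ P, ∀ w ∈ Set.extremePoints ℝ P, u ≠ w →
      dist u w = Metric.diam P := by
  classical
  intro u hu w hw huw
  have hSV : Set.extremePoints ℝ P ⊆ (V : Set E) := hP ▸ extremePoints_convexHull_subset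
  have hSfin : (Set.extremePoints ℝ P).Finite := V.finite_toSet.subset hSV
  set SF : Finset E := hSfin.toFinset with hSF
  set F : Finset (E × E) := (SF ×ˢ SF).filter (fun pq => pq.1 ≠ pq.2) with hF
  have hFne : F.Nonempty := ⟨(u, w), by
    rw [hF, Finset.mem_filter, Finset.mem_product]
    exact ⟨⟨hSfin.mem_toFinset.2 hu, hSfin.mem_toFinset.2 hw⟩, huw⟩⟩
  obtain ⟨pq, hpqF, hpqmin⟩ := F.exists_min_image (fun pq => dist pq.1 pq.2) hFne
  rw [hF, Finset.mem_filter, Finset.mem_product] at hpqF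
  obtain ⟨⟨h1, h2⟩, h3⟩ := hpqF
  have h1' : pq.1 ∈ Set.extremePoints ℝ P := hSfin.mem_toFinset.1 h1
  have h2' : pq.2 ∈ Set.extremePoints ℝ P := hSfin.mem_toFinset.1 h2
  have hmin : ∀ p ∈ Set.extremePoints ℝ P, ∀ q ∈ Set.extremePoints ℝ P, p ≠ q →
      dist pq.1 pq.2 ≤ dist p q := by
    intro p hp q hq hne
    refine hpqmin (p, q) ?_
    rw [hF, Finset.mem_filter, Finset.mem_product]
    exact ⟨⟨hSfin.mem_toFinset.2 hp, hSfin.mem_toFinset.2 hq⟩, hne⟩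
  have hD_ge : Metric.diam P ≤ dist pq.1 pq.2 := by
    by_contra hlt
    push_neg at hlt
    exact min_pair_contradiction V P hP hsub h1' h2' h3 hmin hlt
  have hle : dist u w ≤ Metric.diam P :=
    Metric.dist_le_diam_of_mem (hP ▸ V.finite_toSet.isCompact_convexHull ℝ).isBounded hu.1 hw.1
  have hge : Metric.diam P ≤ dist u w := le_trans hD_ge (hmin u hu w hw huw)
  linarith

lemma equilateral_affineIndependent {D : ℝ} (hD : 0 < D) (W : Finset E)
    (hdist : ∀ x ∈ W, ∀ y ∈ W, x ≠ y → dist x y = D) :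
    AffineIndependent ℝ (fun w : ↥W => (w : E)) := by
  classical
  rw [affineIndependent_iff_of_fintype]
  intro wt hsum hvsub
  set p : ↥W → E := fun w => (w : E) with hp
  rw [Finset.weightedVSub_eq_linear_combination _ hsum] at hvsub
  have hinner : ∀ i j : ↥W, ⟪p i, p j⟫ =
      (‖p i‖^2/2 - D^2/2) + ‖p j‖^2/2 + (if i = j then D^2/2 else 0) := by
    intro i j
    by_cases hij : i = j
    · subst hij
      rw [real_inner_self_eq_norm_sq, if_pos rfl]
      ring
    · have hne : p i ≠ p j := fun h => hij (Subtype.ext h)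
      have hd : ‖p i - p j‖ = D := by
        rw [← dist_eq_norm]; exact hdist _ i.2 _ j.2 hne
      rw [inner_formula, hd, if_neg hij]
      ring
  set K : ℝ := ∑ j : ↥W, wt j * (‖p j‖^2/2) with hK
  have hrow : ∀ i : ↥W, ∑ j : ↥W, wt j * ⟪p i, p j⟫ = K + wt i * (D^2/2) := by
    intro i
    have h1 : ∀ j : ↥W, wt j * ⟪p i, p j⟫ =
        wt j * (‖p i‖^2/2 - D^2/2) + wt j * (‖p j‖^2/2) +
          (if i = j then wt j * (D^2/2) else 0) := by
      intro j
      rw [hinner i j]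
      by_cases hij : i = j <;> simp [hij] <;> ring
    rw [Finset.sum_congr rfl (fun j _ => h1 j), Finset.sum_add_distrib,
      Finset.sum_add_distrib, ← Finset.sum_mul, hsum, zero_mul, zero_add,
      Finset.sum_ite_eq Finset.univ i (fun j => wt j * (D^2/2)), if_pos (Finset.mem_univ i)]
  have hnormsq : (0:ℝ) = D^2/2 * ∑ i : ↥W, (wt i)^2 := by
    have h0 : ⟪∑ i : ↥W, wt i • p i, ∑ j : ↥W, wt j • p j⟫ = (0:ℝ) := by
      rw [hvsub, inner_zero_right]
    rw [sum_inner] at h0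
    have h1 : ∀ i : ↥W, ⟪wt i • p i, ∑ j : ↥W, wt j • p j⟫ = wt i * (K + wt i * (D^2/2)) := by
      intro i
      rw [real_inner_smul_left, inner_sum]
      congr 1
      rw [← hrow i]
      exact Finset.sum_congr rfl fun j _ => by rw [real_inner_smul_right]
    rw [Finset.sum_congr rfl (fun i _ => h1 i)] at h0
    have h2 : ∑ i : ↥W, wt i * (K + wt i * (D^2/2)) =
        K * (∑ i : ↥W, wt i) + D^2/2 * ∑ i : ↥W, (wt i)^2 := by
      rw [Finset.mul_sum, Finset.mul_sum, ← Finset.sum_add_distrib]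
      exact Finset.sum_congr rfl fun i _ => by ring
    rw [h2, hsum, mul_zero, zero_add] at h0
    exact h0.symm
  have hsq : ∑ i : ↥W, (wt i)^2 = 0 := by
    have hD2 : (0:ℝ) < D^2/2 := by positivity
    by_contra h
    have hpos : 0 < ∑ i : ↥W, (wt i)^2 :=
      lt_of_le_of_ne (Finset.sum_nonneg fun i _ => sq_nonneg _) (Ne.symm h)
    nlinarith
  intro i
  have := (Finset.sum_eq_zero_iff_of_nonneg fun i _ => sq_nonneg (wt i)).1 hsq i
    (Finset.mem_univ i)
  exact pow_eq_zero_iff two_ne_zero |>.1 this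

end Assembly

theorem euclidean_subequilateral_is_equilateral_simplex (d : ℕ)
    (V : Finset (EuclideanSpace ℝ (Fin d))) (P : Set (EuclideanSpace ℝ (Fin d)))
    (hP : P = convexHull ℝ (V : Set (EuclideanSpace ℝ (Fin d))))
    (hdim : affineSpan ℝ P = ⊤)
    (hsub : ∀ x y, IsEdge P x y → dist x y = Metric.diam P) :
    (∃ W : Finset (EuclideanSpace ℝ (Fin d)),
        P = convexHull ℝ (W : Set (EuclideanSpace ℝ (Fin d))) ∧
        W.card = d + 1 ∧
        AffineIndependent ℝ (fun w : W => (w : EuclideanSpace ℝ (Fin d))) ∧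
        ∀ x ∈ W, ∀ y ∈ W, x ≠ y → dist x y = Metric.diam P) ∧
      (Set.extremePoints ℝ P).ncard = d + 1 := by
  classical
  have hSV : Set.extremePoints ℝ P ⊆ (V : Set (EuclideanSpace ℝ (Fin d))) :=
    hP ▸ extremePoints_convexHull_subset
  have hSfin : (Set.extremePoints ℝ P).Finite := V.finite_toSet.subset hSV
  set W : Finset (EuclideanSpace ℝ (Fin d)) := hSfin.toFinset with hW
  have hWS : (W : Set (EuclideanSpace ℝ (Fin d))) = Set.extremePoints ℝ P :=
    hSfin.coe_toFinset
  have hPcomp : IsCompact P := hP ▸ V.finite_toSet.isCompact_convexHull ℝ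
  have hPconv : Convex ℝ P := hP ▸ convex_convexHull ℝ _
  -- Krein–Milman: P is the convex hull of its extreme points
  have hPW : P = convexHull ℝ (W : Set (EuclideanSpace ℝ (Fin d))) := by
    rw [hWS]
    have h1 : closure (convexHull ℝ (Set.extremePoints ℝ P)) = P :=
      closure_convexHull_extremePoints hPcomp hPconv
    have h2 : IsClosed (convexHull ℝ (Set.extremePoints ℝ P)) :=
      (hSfin.isCompact_convexHull ℝ).isClosed
    conv_lhs => rw [← h1]
    exact h2.closure_eq
  have hdists : ∀ x ∈ W, ∀ y ∈ W, x ≠ y → dist x y = Metric.diam P := by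
    intro x hx y hy hxy
    exact extreme_dists_eq V P hP hsub x (hSfin.mem_toFinset.1 hx)
      y (hSfin.mem_toFinset.1 hy) hxy
  have hind : AffineIndependent ℝ (fun w : ↥W => (w : EuclideanSpace ℝ (Fin d))) := by
    rcases le_or_gt W.card 1 with hc | hc
    · have : Subsingleton ↥W := by
        rw [← Fintype.card_le_one_iff_subsingleton, Fintype.card_coe]
        exact hc
      exact affineIndependent_of_subsingleton ℝ _
    · obtain ⟨x, hx, y, hy, hxy⟩ := Finset.one_lt_card.1 hc
      have hD0 : 0 < Metric.diam P := by
        rw [← hdists x hx y hy hxy]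
        exact dist_pos.2 hxy
      exact equilateral_affineIndependent hD0 W hdists
  have hspan : affineSpan ℝ (W : Set (EuclideanSpace ℝ (Fin d))) = ⊤ := by
    rw [← affineSpan_convexHull, ← hPW]
    exact hdim
  have hcard : W.card = d + 1 := by
    have hle : W.card ≤ d + 1 := by
      have h1 := hind.card_le_finrank_succ
      rw [Fintype.card_coe] at h1
      have h2 := Submodule.finrank_le
        (vectorSpan ℝ (Set.range (fun w : ↥W => (w : EuclideanSpace ℝ (Fin d)))))
      rw [finrank_euclideanSpace, Fintype.card_fin] at h2
      omega
    have hge : d + 1 ≤ W.card := by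
      have hWne : (W : Set (EuclideanSpace ℝ (Fin d))).Nonempty :=
        AffineSubspace.nonempty_of_affineSpan_eq_top ℝ _ _ hspan
      haveI : Nonempty ↥W := hWne.to_subtype
      have h1 := finrank_vectorSpan_range_add_one_le ℝ
        (fun w : ↥W => (w : EuclideanSpace ℝ (Fin d)))
      have hrange : Set.range (fun w : ↥W => (w : EuclideanSpace ℝ (Fin d))) =
          (W : Set (EuclideanSpace ℝ (Fin d))) := by
        ext x; simp
      have h2 : vectorSpan ℝ (Set.range (fun w : ↥W => (w : EuclideanSpace ℝ (Fin d)))) = ⊤ := by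
        rw [hrange]
        exact AffineSubspace.vectorSpan_eq_top_of_affineSpan_eq_top ℝ _ _ hspan
      rw [h2, finrank_top, finrank_euclideanSpace, Fintype.card_fin, Fintype.card_coe] at h1
      exact h1
    omega
  refine ⟨⟨W, hPW, hcard, hind, hdists⟩, ?_⟩
  rw [← hWS, Set.ncard_coe_finset]
  exact hcard
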